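/- arXiv:1510.07919 — 2 statements merged into one kernel-verified Lean document; each statement's English description precedes it below -/
import Mathlib

section
/- Let N be a near polygon with exactly three points on every line, let f1 and f2 be neighboring valuations of N, and let ε ∈ {−1,0,1} satisfy |f1(x) − f2(x) + ε| ≤ 1 for all points x. Define f3'(x) = f1(x) − 1 for points x with f1(x) = f2(x) − ε and f3'(x) = max{f1(x), f2(x) − ε} for all other points x. Then f3' is a semi-valuation of N; consequently, the function x ↦ f3'(x) − m, where m is the minimum value attained by f3', is a valuation of N. -/
/-- The collinearity graph of a point-line geometry whose lines are given as
sets of points: two points are adjacent when they are distinct and lie on a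
common line. -/
def collGraph {P : Type*} (Lines : Set (Set P)) : SimpleGraph P where
  Adj x y := x ≠ y ∧ ∃ L ∈ Lines, x ∈ L ∧ y ∈ L
  symm := by
    refine ⟨?_⟩
    rintro x y ⟨hxy, L, hL, hx, hy⟩
    exact ⟨hxy.symm, L, hL, hy, hx⟩
  loopless := by
    refine ⟨?_⟩
    rintro x ⟨h, -⟩
    exact h rfl

/-- A near `2d`-gon: a partial linear space (every line carries at least two
points, two distinct points lie on at most one common line) whose collinearity
graph is connected of diameter `d`, and in which for every point `x` and every
line `L` there is a unique point of `L` nearest to `x`.  A near hexagon is a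
`NearPolygon P 3`, a near octagon is a `NearPolygon P 4`. -/
structure NearPolygon (P : Type*) (d : ℕ) where
  Lines : Set (Set P)
  two_pts : ∀ L ∈ Lines, ∃ x ∈ L, ∃ y ∈ L, x ≠ y
  unique_line : ∀ L₁ ∈ Lines, ∀ L₂ ∈ Lines, ∀ x y : P,
    x ≠ y → x ∈ L₁ → y ∈ L₁ → x ∈ L₂ → y ∈ L₂ → L₁ = L₂
  connected : (collGraph Lines).Connected
  diam_le : ∀ x y : P, (collGraph Lines).dist x y ≤ d
  diam_eq : ∃ x y : P, (collGraph Lines).dist x y = d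
  near : ∀ (x : P), ∀ L ∈ Lines, ∃! y, y ∈ L ∧
    ∀ z ∈ L, (collGraph Lines).dist x y ≤ (collGraph Lines).dist x z

/-- A near polygon has order `(s,t)` if every line is incident with exactly
`s+1` points and every point is incident with exactly `t+1` lines. -/
def NearPolygon.hasOrder {P : Type*} {d : ℕ} (N : NearPolygon P d) (s t : ℕ) : Prop :=
  (∀ L ∈ N.Lines, L.ncard = s + 1) ∧
  (∀ x : P, {L | L ∈ N.Lines ∧ x ∈ L}.ncard = t + 1)

/-- A semi-valuation: every line `L` contains a unique point `xL` such that
every other point of `L` has value `f xL + 1`. -/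
def IsSemiValuation {P : Type*} (Lines : Set (Set P)) (f : P → ℤ) : Prop :=
  ∀ L ∈ Lines, ∃! xL, xL ∈ L ∧ ∀ x ∈ L, x ≠ xL → f x = f xL + 1

/-- A valuation: a semi-valuation whose minimum value is `0`. -/
def IsValuation {P : Type*} (Lines : Set (Set P)) (f : P → ℤ) : Prop :=
  IsSemiValuation Lines f ∧ (∀ x, 0 ≤ f x) ∧ (∃ x, f x = 0)

/-- `ι` realizes the geometry with lines `LQ` as a full isometrically embedded
subgeometry of the geometry with lines `LP` (lines being identified with their
point sets, fullness amounts to lines mapping onto lines). -/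
structure IsFullIsomEmb {Q P : Type*} (LQ : Set (Set Q)) (LP : Set (Set P))
    (ι : Q → P) : Prop where
  inj : Function.Injective ι
  line_map : ∀ L ∈ LQ, ι '' L ∈ LP
  isometric : ∀ x y : Q, (collGraph LP).dist (ι x) (ι y) = (collGraph LQ).dist x y

/-- The distance `d(x, P)` from a point `x` of the ambient geometry to the
point set of the embedded subgeometry. -/
noncomputable def distToSub {Q P : Type*} (LP : Set (Set P)) (ι : Q → P) (x : P) : ℕ :=
  sInf (Set.range fun z : Q => (collGraph LP).dist x (ι z))

/-- The function `f_x : y ↦ d(x, y) - d(x, P)` induced on the embedded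
subgeometry by a point `x` of the ambient geometry. -/
noncomputable def inducedVal {Q P : Type*} (LP : Set (Set P)) (ι : Q → P) (x : P) :
    Q → ℤ :=
  fun y => ((collGraph LP).dist x (ι y) : ℤ) - (distToSub LP ι x : ℤ)

/-- Two valuations are neighboring if `|f1 x - f2 x + ε| ≤ 1` for all `x`,
for some integer `ε`. -/
def Neighboring {P : Type*} (f1 f2 : P → ℤ) : Prop :=
  ∃ ε : ℤ, ∀ x, |f1 x - f2 x + ε| ≤ 1

/-- The semi-valuation `f3'` built from two neighboring valuations `f1, f2`
and a compatible `ε`. -/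
def starFun {P : Type*} (f1 f2 : P → ℤ) (ε : ℤ) (x : P) : ℤ :=
  if f1 x = f2 x - ε then f1 x - 1 else max (f1 x) (f2 x - ε)

/-- `StarRel f1 f2 f3` expresses `f1 * f2 = f3`: some `ε ∈ {-1,0,1}` witnesses
that `f1` and `f2` are neighboring, and, for every such `ε`, subtracting the
minimum value `m` of `f3' = starFun f1 f2 ε` from `f3'` yields `f3`. -/
def StarRel {P : Type*} (f1 f2 f3 : P → ℤ) : Prop :=
  (∃ ε ∈ ({-1, 0, 1} : Set ℤ), ∀ x, |f1 x - f2 x + ε| ≤ 1) ∧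
  ∀ ε ∈ ({-1, 0, 1} : Set ℤ), (∀ x, |f1 x - f2 x + ε| ≤ 1) →
    ∃ m : ℤ, IsLeast (Set.range (starFun f1 f2 ε)) m ∧
      ∀ x, f3 x = starFun f1 f2 ε x - m

/-- A subspace: together with two distinct collinear points it contains every
line through them. -/
def IsSubspace {P : Type*} (Lines : Set (Set P)) (X : Set P) : Prop :=
  ∀ L ∈ Lines, ∀ x ∈ L, ∀ y ∈ L, x ≠ y → x ∈ X → y ∈ X → L ⊆ X

/-- A convex subspace: a subspace containing every point on a shortest path
between any two of its points. -/
def IsConvexSubspace {P : Type*} (Lines : Set (Set P)) (X : Set P) : Prop :=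
  IsSubspace Lines X ∧
  ∀ x ∈ X, ∀ y ∈ X, ∀ z : P,
    (collGraph Lines).dist x z + (collGraph Lines).dist z y
      = (collGraph Lines).dist x y → z ∈ X

/-- A quad: a convex subspace of diameter `2` inducing (with the lines fully
contained in it) a nondegenerate generalized quadrangle. -/
def IsQuad {P : Type*} (Lines : Set (Set P)) (Q : Set P) : Prop :=
  IsConvexSubspace Lines Q ∧
  (∀ x ∈ Q, ∀ y ∈ Q, (collGraph Lines).dist x y ≤ 2) ∧
  (∃ x ∈ Q, ∃ y ∈ Q, (collGraph Lines).dist x y = 2) ∧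
  (∀ x ∈ Q, ∀ L ∈ Lines, L ⊆ Q → x ∉ L →
    ∃! y, y ∈ L ∧ (collGraph Lines).Adj x y) ∧
  (∀ x ∈ Q, ∃ L₁ ∈ Lines, ∃ L₂ ∈ Lines,
    L₁ ⊆ Q ∧ L₂ ⊆ Q ∧ x ∈ L₁ ∧ x ∈ L₂ ∧ L₁ ≠ L₂) ∧
  (∃ x ∈ Q, ∃ y ∈ Q, x ≠ y ∧ ¬ (collGraph Lines).Adj x y)

/-- A quad has order `(s,t')` if each of its lines has `s+1` points and each
of its points is on exactly `t'+1` lines contained in the quad. -/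
def QuadHasOrder {P : Type*} (Lines : Set (Set P)) (Q : Set P) (s t' : ℕ) : Prop :=
  (∀ L ∈ Lines, L ⊆ Q → L.ncard = s + 1) ∧
  (∀ x ∈ Q, {L | L ∈ Lines ∧ L ⊆ Q ∧ x ∈ L}.ncard = t' + 1)


private lemma starFun_lb_aux {P : Type*} (f1 f2 : P → ℤ) (ε : ℤ)
    (h1 : ∀ x, 0 ≤ f1 x) (x : P) : -1 ≤ starFun f1 f2 ε x := by
  unfold starFun
  split_ifs with h
  · have := h1 x; omega
  · exact le_trans (by have := h1 x; omega) (le_max_left _ _)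

private lemma starFun_semival_aux {P : Type*} {d : ℕ} (N : NearPolygon P d)
    (h3 : ∀ L ∈ N.Lines, L.ncard = 3)
    (f1 f2 : P → ℤ) (hf1 : IsValuation N.Lines f1) (hf2 : IsValuation N.Lines f2)
    (ε : ℤ) (hb : ∀ x, |f1 x - f2 x + ε| ≤ 1) :
    IsSemiValuation N.Lines (starFun f1 f2 ε) := by
  intro L hL
  obtain ⟨a, ⟨haL, hfa⟩, -⟩ := hf1.1 L hL
  obtain ⟨b, ⟨hbL, hfb⟩, -⟩ := hf2.1 L hL
  suffices h : ∃ xL ∈ L, ∀ x ∈ L, x ≠ xL →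
      starFun f1 f2 ε x = starFun f1 f2 ε xL + 1 by
    obtain ⟨xL, hx, hp⟩ := h
    refine ⟨xL, ⟨hx, hp⟩, ?_⟩
    rintro y ⟨hy, hyp⟩
    by_contra hne
    have h1 := hp y hy hne
    have h2 := hyp xL hx (Ne.symm hne)
    omega
  by_cases hab : a = b
  · subst hab
    refine ⟨a, haL, fun x hx hne => ?_⟩
    have h1 : f1 x = f1 a + 1 := hfa x hx hne
    have h2 : f2 x = f2 a + 1 := hfb x hx hne
    have hmax : max (f1 a + 1) (f2 a - ε + 1) = max (f1 a) (f2 a - ε) + 1 :=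
      max_add_add_right _ _ _
    simp only [starFun, h1, h2]
    split_ifs with p q
    · omega
    · omega
    · omega
    · have he : f2 a + 1 - ε = f2 a - ε + 1 := by ring
      rw [he, hmax]
  · -- a ≠ b
    have hfba : f1 b = f1 a + 1 := hfa b hbL (Ne.symm hab)
    have hfab : f2 a = f2 b + 1 := hfb a haL hab
    have e1 := abs_le.mp (hb a)
    have e2 := abs_le.mp (hb b)
    have hmn : f1 a = f2 b - ε := by omega
    have h3L := h3 L hL
    have hLfin : L.Finite := Set.finite_of_ncard_ne_zero (by omega)
    have hnot : ¬ L ⊆ ({a, b} : Set P) := by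
      intro hsub
      have hle := Set.ncard_le_ncard hsub (Set.toFinite _)
      have h2 : ({a, b} : Set P).ncard ≤ 2 := by
        have h' := Set.ncard_insert_le a ({b} : Set P)
        simpa [Set.ncard_singleton] using h'
      omega
    obtain ⟨c, hcL, hc⟩ := Set.not_subset.mp hnot
    simp only [Set.mem_insert_iff, Set.mem_singleton_iff, not_or] at hc
    obtain ⟨hca, hcb⟩ := hc
    have hset : ({a, b, c} : Set P) = L := by
      apply Set.eq_of_subset_of_ncard_le
      · intro x hx
        simp only [Set.mem_insert_iff, Set.mem_singleton_iff] at hx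
        rcases hx with rfl | rfl | rfl <;> assumption
      · have hcard : ({a, b, c} : Set P).ncard = 3 :=
          Set.ncard_eq_three.mpr ⟨a, b, c, hab, Ne.symm hca, Ne.symm hcb, rfl⟩
        omega
      · exact hLfin
    have hcover : ∀ x ∈ L, x = a ∨ x = b ∨ x = c := by
      intro x hx
      rw [← hset] at hx
      simpa using hx
    have hf1c : f1 c = f1 a + 1 := hfa c hcL hca
    have hf2c : f2 c = f2 b + 1 := hfb c hcL hcb
    have hsc : starFun f1 f2 ε c = f1 a := by
      simp only [starFun]
      rw [if_pos (by omega)]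
      omega
    have hsa : starFun f1 f2 ε a = f1 a + 1 := by
      simp only [starFun]
      rw [if_neg (by omega), max_eq_right (by omega : f1 a ≤ f2 a - ε)]
      omega
    have hsb : starFun f1 f2 ε b = f1 a + 1 := by
      simp only [starFun]
      rw [if_neg (by omega), max_eq_left (by omega : f2 b - ε ≤ f1 b)]
      omega
    refine ⟨c, hcL, fun x hx hne => ?_⟩
    rcases hcover x hx with rfl | rfl | rfl
    · rw [hsa, hsc]
    · rw [hsb, hsc]
    · exact absurd rfl hne

/-- Let `N` be a near polygon with exactly three points on each
line, let `f1, f2` be neighboring valuations of `N` with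
`ε ∈ {-1,0,1}` satisfying `|f1 x - f2 x + ε| ≤ 1` for all `x`.  Then
`f3' = starFun f1 f2 ε` is a semi-valuation of `N`, and subtracting its
minimum value `m` yields a valuation of `N`. -/
theorem starFun_semivaluation {P : Type*} {d : ℕ} (N : NearPolygon P d)
    (h3 : ∀ L ∈ N.Lines, L.ncard = 3)
    (f1 f2 : P → ℤ) (hf1 : IsValuation N.Lines f1) (hf2 : IsValuation N.Lines f2)
    (ε : ℤ) (hε : ε ∈ ({-1, 0, 1} : Set ℤ))
    (hb : ∀ x, |f1 x - f2 x + ε| ≤ 1) :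
    IsSemiValuation N.Lines (starFun f1 f2 ε) ∧
      ∃ m : ℤ, IsLeast (Set.range (starFun f1 f2 ε)) m ∧
        IsValuation N.Lines (fun x => starFun f1 f2 ε x - m) := by
  classical
  have hsemi : IsSemiValuation N.Lines (starFun f1 f2 ε) :=
    starFun_semival_aux N h3 f1 f2 hf1 hf2 ε hb
  refine ⟨hsemi, ?_⟩
  obtain ⟨x0, -, -⟩ := N.diam_eq
  obtain ⟨m, hm1, hm2⟩ := Int.exists_least_of_bdd
    (P := fun z => z ∈ Set.range (starFun f1 f2 ε))
    ⟨-1, by rintro z ⟨x, rfl⟩; exact starFun_lb_aux f1 f2 ε hf1.2.1 x⟩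
    ⟨starFun f1 f2 ε x0, x0, rfl⟩
  refine ⟨m, ⟨hm1, fun z hz => hm2 z hz⟩, ?_, ?_, ?_⟩
  · intro L hL
    obtain ⟨xL, ⟨hmem, hval⟩, huniq⟩ := hsemi L hL
    refine ⟨xL, ⟨hmem, fun x hx hne => by
      have := hval x hx hne
      show starFun f1 f2 ε x - m = starFun f1 f2 ε xL - m + 1
      omega⟩, ?_⟩
    rintro y ⟨hy, hyp⟩
    refine huniq y ⟨hy, fun x hx hne => ?_⟩
    have := hyp x hx hne
    have h' : starFun f1 f2 ε x - m = starFun f1 f2 ε y - m + 1 := this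
    omega
  · intro x
    have := hm2 (starFun f1 f2 ε x) ⟨x, rfl⟩
    show (0:ℤ) ≤ starFun f1 f2 ε x - m
    omega
  · obtain ⟨x, hx⟩ := hm1
    refine ⟨x, ?_⟩
    show starFun f1 f2 ε x - m = 0
    omega
end

section
/- Every quad of a near hexagon of order (2,2) is a grid-quad, i.e., has order (2,1). -/
section QuadGridHelpers

variable {P : Type*}

lemma collGraph_adj (Lines : Set (Set P)) (x y : P) :
    (collGraph Lines).Adj x y ↔ x ≠ y ∧ ∃ L ∈ Lines, x ∈ L ∧ y ∈ L := Iff.rfl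

variable (N : NearPolygon P 3)

private lemma np_dist_zero {x y : P} (h : (collGraph N.Lines).dist x y = 0) : x = y :=
  N.connected.dist_eq_zero_iff.mp h

/-- At most one point of a line `L` not containing `x` is adjacent to `x`. -/
private lemma at_most_one_adj {x : P} {L : Set P} (hL : L ∈ N.Lines) (hx : x ∉ L)
    {y z : P} (hy : y ∈ L) (hz : z ∈ L)
    (hay : (collGraph N.Lines).Adj x y) (haz : (collGraph N.Lines).Adj x z) : y = z := by
  obtain ⟨w, -, huniq⟩ := N.near x L hL
  have hmin : ∀ u : P, (collGraph N.Lines).Adj x u → u ∈ L →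
      ∀ v ∈ L, (collGraph N.Lines).dist x u ≤ (collGraph N.Lines).dist x v := by
    intro u hu huL v hvL
    have h1 : (collGraph N.Lines).dist x u = 1 := SimpleGraph.dist_eq_one_iff_adj.mpr hu
    have h2 : (collGraph N.Lines).dist x v ≠ 0 := by
      intro h0; exact hx (by rw [np_dist_zero N h0]; exact hvL)
    omega
  exact (huniq y ⟨hy, hmin y hay hy⟩).trans (huniq z ⟨hz, hmin z haz hz⟩).symm

/-- Two distinct points of a quad that are not adjacent are at distance 2. -/
private lemma quad_dist_two {Q : Set P} (hQ : IsQuad N.Lines Q) {x y : P}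
    (hx : x ∈ Q) (hy : y ∈ Q) (hne : x ≠ y) (hnadj : ¬ (collGraph N.Lines).Adj x y) :
    (collGraph N.Lines).dist x y = 2 := by
  have h2 := hQ.2.1 x hx y hy
  have h0 : (collGraph N.Lines).dist x y ≠ 0 := fun h => hne (np_dist_zero N h)
  have h1 : (collGraph N.Lines).dist x y ≠ 1 := fun h =>
    hnadj (SimpleGraph.dist_eq_one_iff_adj.mp h)
  omega

/-- Claim A: if every line through `x ∈ Q` is contained in `Q` and `y ∈ Q` is at
distance 2 from `x`, then every line through `y` is contained in `Q`. -/
private lemma claimA (hord : N.hasOrder 2 2) {Q : Set P} (hQ : IsQuad N.Lines Q)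
    {x y : P} (hx : x ∈ Q)
    (hxG : ∀ L ∈ N.Lines, x ∈ L → L ⊆ Q) (hy : y ∈ Q)
    (hd : (collGraph N.Lines).dist x y = 2) :
    ∀ L ∈ N.Lines, y ∈ L → L ⊆ Q := by
  have hne : x ≠ y := by
    intro h; rw [h, SimpleGraph.dist_self] at hd; omega
  have hnadj : ¬ (collGraph N.Lines).Adj x y := by
    intro h; rw [SimpleGraph.dist_eq_one_iff_adj.mpr h] at hd; omega
  -- from each line through x, build a line through y inside Q
  have key : ∀ L ∈ N.Lines, x ∈ L → ∃ M z, M ∈ N.Lines ∧ M ⊆ Q ∧ y ∈ M ∧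
      z ∈ L ∧ z ∈ M ∧ (collGraph N.Lines).Adj x z ∧ (collGraph N.Lines).Adj y z := by
    intro L hL hxL
    have hLQ : L ⊆ Q := hxG L hL hxL
    have hyL : y ∉ L := fun hyL => hnadj ⟨hne, L, hL, hxL, hyL⟩
    obtain ⟨z, ⟨hzL, hzadj⟩, -⟩ := hQ.2.2.2.1 y hy L hL hLQ hyL
    obtain ⟨M, hM, hyM, hzM⟩ := hzadj.2
    have hMQ : M ⊆ Q := hQ.1.1 M hM y hyM z hzM hzadj.1 hy (hLQ hzL)
    have hxz : (collGraph N.Lines).Adj x z := by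
      refine ⟨?_, L, hL, hxL, hzL⟩
      intro h; exact hnadj (h ▸ hzadj).symm
    exact ⟨M, z, hM, hMQ, hyM, hzL, hzM, hxz, hzadj⟩
  -- injectivity: distinct lines through x yield distinct lines through y
  have hinj : ∀ L L' M M' z z', L ∈ N.Lines → L' ∈ N.Lines → M ∈ N.Lines →
      x ∈ L → x ∈ L' → y ∈ M → z ∈ L → z ∈ M → z' ∈ L' → z' ∈ M →
      (collGraph N.Lines).Adj x z → (collGraph N.Lines).Adj x z' →
      M = M' → L ≠ L' → False := by
    intro L L' M M' z z' hL hL' hM hxL hxL' hyM hzL hzM hz'L' hz'M hxz hxz' _ hLL'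
    have hxM : x ∉ M := fun hxM => hnadj ⟨hne, M, hM, hxM, hyM⟩
    have hzz' : z = z' := at_most_one_adj N hM hxM hzM hz'M hxz hxz'
    subst hzz'
    exact hLL' (N.unique_line L hL L' hL' x z hxz.1 hxL hzL hxL' hz'L')
  -- the three lines through x
  obtain ⟨L₁, L₂, L₃, h12, h13, h23, hTx⟩ := Set.ncard_eq_three.mp (hord.2 x)
  have hmemx : ∀ L ∈ ({L₁, L₂, L₃} : Set (Set P)), L ∈ N.Lines ∧ x ∈ L := by
    intro L hL; rw [← hTx] at hL; exact hL
  obtain ⟨hL₁, hxL₁⟩ := hmemx L₁ (by simp)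
  obtain ⟨hL₂, hxL₂⟩ := hmemx L₂ (by simp)
  obtain ⟨hL₃, hxL₃⟩ := hmemx L₃ (by simp)
  obtain ⟨M₁, z₁, hM₁, hM₁Q, hyM₁, hz₁L, hz₁M, hxz₁, -⟩ := key L₁ hL₁ hxL₁
  obtain ⟨M₂, z₂, hM₂, hM₂Q, hyM₂, hz₂L, hz₂M, hxz₂, -⟩ := key L₂ hL₂ hxL₂
  obtain ⟨M₃, z₃, hM₃, hM₃Q, hyM₃, hz₃L, hz₃M, hxz₃, -⟩ := key L₃ hL₃ hxL₃
  have hM12 : M₁ ≠ M₂ := fun h =>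
    hinj L₁ L₂ M₁ M₁ z₁ z₂ hL₁ hL₂ hM₁ hxL₁ hxL₂ hyM₁ hz₁L hz₁M hz₂L (h ▸ hz₂M)
      hxz₁ hxz₂ rfl h12
  have hM13 : M₁ ≠ M₃ := fun h =>
    hinj L₁ L₃ M₁ M₁ z₁ z₃ hL₁ hL₃ hM₁ hxL₁ hxL₃ hyM₁ hz₁L hz₁M hz₃L (h ▸ hz₃M)
      hxz₁ hxz₃ rfl h13
  have hM23 : M₂ ≠ M₃ := fun h =>
    hinj L₂ L₃ M₂ M₂ z₂ z₃ hL₂ hL₃ hM₂ hxL₂ hxL₃ hyM₂ hz₂L hz₂M hz₃L (h ▸ hz₃M)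
      hxz₂ hxz₃ rfl h23
  -- the set of lines through y has exactly three elements
  have hTyfin : ({L | L ∈ N.Lines ∧ y ∈ L} : Set (Set P)).Finite :=
    Set.finite_of_ncard_ne_zero (by rw [hord.2 y]; omega)
  have hsub : ({M₁, M₂, M₃} : Set (Set P)) ⊆ {L | L ∈ N.Lines ∧ y ∈ L} := by
    rintro M (rfl | rfl | rfl)
    · exact ⟨hM₁, hyM₁⟩
    · exact ⟨hM₂, hyM₂⟩
    · exact ⟨hM₃, hyM₃⟩
  have hcard : ({M₁, M₂, M₃} : Set (Set P)).ncard = 3 :=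
    Set.ncard_eq_three.mpr ⟨M₁, M₂, M₃, hM12, hM13, hM23, rfl⟩
  have heq : ({M₁, M₂, M₃} : Set (Set P)) = {L | L ∈ N.Lines ∧ y ∈ L} :=
    Set.eq_of_subset_of_ncard_le hsub (by rw [hord.2 y, hcard]) hTyfin
  intro L hL hyL
  have : L ∈ ({M₁, M₂, M₃} : Set (Set P)) := by rw [heq]; exact ⟨hL, hyL⟩
  rcases this with rfl | rfl | rfl
  · exact hM₁Q
  · exact hM₂Q
  · exact hM₃Q

/-- Claim B: the property "all lines through the point are inside `Q`"
propagates along adjacency. -/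
private lemma claimB (hord : N.hasOrder 2 2) {Q : Set P} (hQ : IsQuad N.Lines Q)
    {x y : P} (hx : x ∈ Q)
    (hxG : ∀ L ∈ N.Lines, x ∈ L → L ⊆ Q)
    (hadj : (collGraph N.Lines).Adj x y) :
    y ∈ Q ∧ ∀ L ∈ N.Lines, y ∈ L → L ⊆ Q := by
  obtain ⟨hnexy, L, hL, hxL, hyL⟩ := hadj
  have hLQ : L ⊆ Q := hxG L hL hxL
  have hyQ : y ∈ Q := hLQ hyL
  -- a second line L' through x, distinct from L
  obtain ⟨L₁, L₂, L₃, h12, h13, h23, hTx⟩ := Set.ncard_eq_three.mp (hord.2 x)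
  have hmemx : ∀ K ∈ ({L₁, L₂, L₃} : Set (Set P)), K ∈ N.Lines ∧ x ∈ K := by
    intro K hK; rw [← hTx] at hK; exact hK
  obtain ⟨L', hL', hxL', hL'ne⟩ :
      ∃ L' , L' ∈ N.Lines ∧ x ∈ L' ∧ L' ≠ L := by
    by_cases h : L₁ = L
    · obtain ⟨a, b⟩ := hmemx L₂ (by simp)
      exact ⟨L₂, a, b, fun hh => h12 (h ▸ hh ▸ rfl)⟩
    · obtain ⟨a, b⟩ := hmemx L₁ (by simp)
      exact ⟨L₁, a, b, h⟩
  have hL'Q : L' ⊆ Q := hxG L' hL' hxL'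
  -- a point p ≠ x on L'
  obtain ⟨a, ha, b, hb, hab⟩ := N.two_pts L' hL'
  obtain ⟨p, hpL', hpx⟩ : ∃ p, p ∈ L' ∧ p ≠ x := by
    by_cases h : a = x
    · exact ⟨b, hb, fun hh => hab (h ▸ hh ▸ rfl)⟩
    · exact ⟨a, ha, h⟩
  have hpQ : p ∈ Q := hL'Q hpL'
  have hyL' : y ∉ L' := fun h =>
    hL'ne (N.unique_line L' hL' L hL x y hnexy hxL' h hxL hyL)
  have hadjyx : (collGraph N.Lines).Adj y x := ⟨hnexy.symm, L, hL, hyL, hxL⟩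
  have hpy : ¬ (collGraph N.Lines).Adj y p := fun h =>
    hpx (at_most_one_adj N hL' hyL' hpL' hxL' h hadjyx)
  have hpney : p ≠ y := fun h => hyL' (h ▸ hpL')
  -- a second line M through p inside Q, distinct from L'
  obtain ⟨M₁, hM₁, M₂, hM₂, hM₁Q, hM₂Q, hpM₁, hpM₂, hMne⟩ := hQ.2.2.2.2.1 p hpQ
  obtain ⟨M, hM, hMQ, hpM, hMneL'⟩ : ∃ M, M ∈ N.Lines ∧ M ⊆ Q ∧ p ∈ M ∧ M ≠ L' := by
    by_cases h : M₁ = L'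
    · exact ⟨M₂, hM₂, hM₂Q, hpM₂, fun hh => hMne (h.trans hh.symm)⟩
    · exact ⟨M₁, hM₁, hM₁Q, hpM₁, h⟩
  have hxM : x ∉ M := fun h =>
    hMneL' (N.unique_line M hM L' hL' x p (fun hh => hpx hh.symm) h hpM hxL' hpL')
  have hyM : y ∉ M := fun h => hpy ⟨fun hh => hpney hh.symm, M, hM, h, hpM⟩
  have hadjxp : (collGraph N.Lines).Adj x p :=
    ⟨fun h => hpx h.symm, L', hL', hxL', hpL'⟩
  -- a third point v of M, distinct from p and not adjacent to y
  obtain ⟨c₁, c₂, c₃, hc12, hc13, hc23, hMeq⟩ := Set.ncard_eq_three.mp (hord.1 M hM)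
  obtain ⟨v, hvM, hvp, hvy⟩ :
      ∃ v, v ∈ M ∧ v ≠ p ∧ ¬ (collGraph N.Lines).Adj y v := by
    by_contra hcon
    push_neg at hcon
    have hu : ∀ u w : P, u ∈ M → w ∈ M → u ≠ p → w ≠ p → u ≠ w → False := by
      intro u w huM hwM hup hwp huw
      exact huw (at_most_one_adj N hM hyM huM hwM (hcon u huM hup) (hcon w hwM hwp))
    have hmem : ∀ c ∈ ({c₁, c₂, c₃} : Set P), c ∈ M := by
      intro c hc; rw [hMeq]; exact hc
    have hp' : p ∈ ({c₁, c₂, c₃} : Set P) := by rw [← hMeq]; exact hpM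
    rcases hp' with h | h | h
    · exact hu c₂ c₃ (hmem c₂ (by simp)) (hmem c₃ (by simp))
        (fun hh => hc12 (hh.trans h).symm) (fun hh => hc13 (hh.trans h).symm) hc23
    · exact hu c₁ c₃ (hmem c₁ (by simp)) (hmem c₃ (by simp))
        (fun hh => hc12 (hh.trans h)) (fun hh => hc23 (hh.trans h).symm) hc13
    · exact hu c₁ c₂ (hmem c₁ (by simp)) (hmem c₂ (by simp))
        (fun hh => hc13 (hh.trans h)) (fun hh => hc23 (hh.trans h)) hc12
  have hvQ : v ∈ Q := hMQ hvM
  have hvx : ¬ (collGraph N.Lines).Adj x v := fun h =>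
    hvp (at_most_one_adj N hM hxM hvM hpM h hadjxp)
  have hvnex : v ≠ x := fun h => hxM (h ▸ hvM)
  have hdxv : (collGraph N.Lines).dist x v = 2 :=
    quad_dist_two N hQ hx hvQ hvnex.symm hvx
  have hvney : v ≠ y := fun h => hyM (h ▸ hvM)
  have hdvy : (collGraph N.Lines).dist v y = 2 :=
    quad_dist_two N hQ hvQ hyQ hvney (fun h => hvy h.symm)
  have hvG := claimA N hord hQ hx hxG hvQ hdxv
  exact ⟨hyQ, claimA N hord hQ hvQ hvG hyQ hdvy⟩

end QuadGridHelpers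

/-- Every quad of a near hexagon of order `(2,2)` is a
grid-quad, i.e. has order `(2,1)`. -/
theorem quads_are_grids {P : Type*} (N : NearPolygon P 3) (hord : N.hasOrder 2 2)
    (Q : Set P) (hQ : IsQuad N.Lines Q) :
    QuadHasOrder N.Lines Q 2 1 := by
  constructor
  · exact fun L hL _ => hord.1 L hL
  · intro x hx
    -- there is a line through x not contained in Q
    have key : ∃ L ∈ N.Lines, x ∈ L ∧ ¬ L ⊆ Q := by
      by_contra hcon
      push_neg at hcon
      have hxG : ∀ L ∈ N.Lines, x ∈ L → L ⊆ Q := fun L hL hxL => hcon L hL hxL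
      have walkprop : ∀ a b : P, (collGraph N.Lines).Walk a b →
          (a ∈ Q ∧ ∀ L ∈ N.Lines, a ∈ L → L ⊆ Q) →
          (b ∈ Q ∧ ∀ L ∈ N.Lines, b ∈ L → L ⊆ Q) := by
        intro a b w
        induction w with
        | nil => exact id
        | cons h p ih => exact fun ha => ih (claimB N hord hQ ha.1 ha.2 h)
      have hall : ∀ y : P, y ∈ Q := by
        intro y
        obtain ⟨w⟩ := N.connected.preconnected x y
        exact (walkprop x y w ⟨hx, hxG⟩).1
      obtain ⟨a, b, hab⟩ := N.diam_eq
      have := hQ.2.1 a (hall a) b (hall b)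
      omega
    obtain ⟨L₀, hL₀, hxL₀, hnsub⟩ := key
    have hTfin : ({L | L ∈ N.Lines ∧ x ∈ L} : Set (Set P)).Finite :=
      Set.finite_of_ncard_ne_zero (by rw [hord.2 x]; omega)
    have hST : ({L | L ∈ N.Lines ∧ L ⊆ Q ∧ x ∈ L} : Set (Set P)) ⊆
        {L | L ∈ N.Lines ∧ x ∈ L} := fun L hL => ⟨hL.1, hL.2.2⟩
    have hssub : ({L | L ∈ N.Lines ∧ L ⊆ Q ∧ x ∈ L} : Set (Set P)) ⊂
        {L | L ∈ N.Lines ∧ x ∈ L} :=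
      ⟨hST, fun h => hnsub (h ⟨hL₀, hxL₀⟩).2.1⟩
    have hlt := Set.ncard_lt_ncard hssub hTfin
    rw [hord.2 x] at hlt
    obtain ⟨L₁, hL₁, L₂, hL₂, hL₁Q, hL₂Q, hxL₁, hxL₂, hLne⟩ := hQ.2.2.2.2.1 x hx
    have hpair : ({L₁, L₂} : Set (Set P)) ⊆
        {L | L ∈ N.Lines ∧ L ⊆ Q ∧ x ∈ L} := by
      rintro L (rfl | rfl)
      · exact ⟨hL₁, hL₁Q, hxL₁⟩
      · exact ⟨hL₂, hL₂Q, hxL₂⟩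
    have hge := Set.ncard_le_ncard hpair (hTfin.subset hST)
    rw [Set.ncard_pair hLne] at hge
    omega
end
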